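/- Let E ⊆ ℝ^d be a bounded open set of positive finite Lebesgue measure, k ≥ 1 an integer, and P the componentwise orthogonal projection of L²(E;ℝ^d) onto vector fields whose components are polynomials of total degree at most k−1. Let κ : E → ℝ^{d×d} be measurable with |κ(x)ξ| ≤ α*|ξ| for almost every x ∈ E and all ξ ∈ ℝ^d, where α* > 0. Then for all g, g_h ∈ L²(E;ℝ^d): ‖(I − P)(κ·(P g_h))‖²_{L²(E;ℝ^d)} ≤ 2 ‖P(κ·g) − κ·g‖²_{L²(E;ℝ^d)} + 8 (α*)² ‖g − g_h‖²_{L²(E;ℝ^d)} + 8 (α*)² ‖g_h − P g_h‖²_{L²(E;ℝ^d)}, where κ·f denotes the pointwise matrix–vector product x ↦ κ(x) f(x) and I the identity on L²(E;ℝ^d). -/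

import Mathlib

open MeasureTheory

/-- `p : ℝ^d → ℝ` is a real polynomial function of total degree at most `k`. -/
def IsPolyFunPi (d k : ℕ) (p : (Fin d → ℝ) → ℝ) : Prop :=
  ∃ P : MvPolynomial (Fin d) ℝ, P.totalDegree ≤ k ∧
    ∀ x, p x = MvPolynomial.eval x P

/-- `F` is the componentwise `L²(E;ℝ^d)`-orthogonal projection of `f` onto vector fields
with polynomial components of total degree at most `k`: each component of `F` is such a
polynomial, and `f − F` is orthogonal to all such polynomials, componentwise. -/
def IsVecProj (d k : ℕ) (E : Set (Fin d → ℝ))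
    (f F : (Fin d → ℝ) → (Fin d → ℝ)) : Prop :=
  (∀ i, IsPolyFunPi d k fun x => F x i) ∧
  ∀ i : Fin d, ∀ q, IsPolyFunPi d k q → ∫ x in E, (f x i - F x i) * q x = 0

namespace IncAux

variable {d : ℕ}

lemma polyFun_sub {k : ℕ} {p q : (Fin d → ℝ) → ℝ} (hp : IsPolyFunPi d k p)
    (hq : IsPolyFunPi d k q) : IsPolyFunPi d k (fun x => p x - q x) := by
  obtain ⟨P, hP, hPe⟩ := hp; obtain ⟨Q, hQ, hQe⟩ := hq
  exact ⟨P - Q, (MvPolynomial.totalDegree_sub P Q).trans (max_le hP hQ),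
    fun x => by simp [hPe, hQe]⟩

lemma polyFun_memℒp {k : ℕ} {p : (Fin d → ℝ) → ℝ} (hp : IsPolyFunPi d k p)
    {E : Set (Fin d → ℝ)} (hE : IsOpen E) (hEb : Bornology.IsBounded E)
    (hfin : volume E < ⊤) : MemLp p 2 (volume.restrict E) := by
  obtain ⟨P, -, hPe⟩ := hp
  have hc : Continuous p := by
    have : p = fun x => MvPolynomial.eval x P := funext hPe
    rw [this]; exact MvPolynomial.continuous_eval (p := P)
  obtain ⟨r, hr⟩ := hEb.subset_closedBall 0
  obtain ⟨C, hC⟩ :=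
    (isCompact_closedBall (0 : Fin d → ℝ) r).exists_bound_of_continuousOn hc.continuousOn
  haveI : IsFiniteMeasure (volume.restrict E) :=
    ⟨by simpa [Measure.restrict_apply_univ] using hfin⟩
  exact MemLp.of_bound hc.aestronglyMeasurable C
    (ae_restrict_of_forall_mem hE.measurableSet fun x hx => hC x (hr hx))

lemma comp_memℒp {f : (Fin d → ℝ) → (Fin d → ℝ)} {μ : Measure (Fin d → ℝ)}
    (hf : MemLp f 2 μ) (i : Fin d) : MemLp (fun x => f x i) 2 μ :=
  MemLp.of_le hf ((continuous_apply i).comp_aestronglyMeasurable hf.1)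
    (Filter.Eventually.of_forall fun x => norm_le_pi_norm (f x) i)

lemma memℒp_sub {X : Type*} [MeasurableSpace X] {μ : Measure X} {f g : X → ℝ}
    (hf : MemLp f 2 μ) (hg : MemLp g 2 μ) : MemLp (fun x => f x - g x) 2 μ :=
  hf.sub hg

lemma mul_integrable {X : Type*} [MeasurableSpace X] {μ : Measure X} {f g : X → ℝ}
    (hf : MemLp f 2 μ) (hg : MemLp g 2 μ) : Integrable (fun x => f x * g x) μ := by
  refine Integrable.mono' ((hf.integrable_sq.add hg.integrable_sq).const_mul (1/2))
    (hf.1.mul hg.1) (Filter.Eventually.of_forall fun x => ?_)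
  rw [Real.norm_eq_abs, abs_mul]
  simp only [Pi.add_apply]
  nlinarith [sq_nonneg (|f x| - |g x|), sq_abs (f x), sq_abs (g x),
    abs_nonneg (f x), abs_nonneg (g x)]

/-- projection optimality, scalar version -/
lemma proj_opt {X : Type*} [MeasurableSpace X] {μ : Measure X} {f F Q : X → ℝ}
    (hf : MemLp f 2 μ) (hF : MemLp F 2 μ) (hQ : MemLp Q 2 μ)
    (horth : ∫ x, (f x - F x) * (F x - Q x) ∂μ = 0) :
    ∫ x, (f x - F x) ^ 2 ∂μ ≤ ∫ x, (f x - Q x) ^ 2 ∂μ := by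
  have i1 : Integrable (fun x => (f x - F x) ^ 2) μ := (memℒp_sub hf hF).integrable_sq
  have i2 : Integrable (fun x => 2 * ((f x - F x) * (F x - Q x))) μ :=
    (mul_integrable (memℒp_sub hf hF) (memℒp_sub hF hQ)).const_mul 2
  have i3 : Integrable (fun x => (F x - Q x) ^ 2) μ := (memℒp_sub hF hQ).integrable_sq
  have key : (fun x => (f x - Q x) ^ 2) = fun x =>
      (f x - F x) ^ 2 + (2 * ((f x - F x) * (F x - Q x)) + (F x - Q x) ^ 2) :=
    funext fun x => by ring
  have i23 : Integrable (fun x => 2 * ((f x - F x) * (F x - Q x)) + (F x - Q x) ^ 2) μ :=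
    i2.add i3
  rw [key, integral_add i1 i23, integral_add i2 i3, integral_const_mul, horth]
  have h3 : 0 ≤ ∫ x, (F x - Q x) ^ 2 ∂μ := integral_nonneg fun x => sq_nonneg _
  linarith


lemma entry_bound {μ : Measure (Fin d → ℝ)} {κ : (Fin d → ℝ) → Matrix (Fin d) (Fin d) ℝ}
    {αs : ℝ}
    (hκb : ∀ᵐ x ∂μ, ∀ ξ : Fin d → ℝ,
      Real.sqrt (∑ i, ((κ x).mulVec ξ i) ^ 2) ≤ αs * Real.sqrt (∑ i, (ξ i) ^ 2)) :
    ∀ᵐ x ∂μ, ∀ i j, |κ x i j| ≤ αs := by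
  filter_upwards [hκb] with x hx i j
  have h := hx (Pi.single j 1)
  have h1 : ∀ i', (κ x).mulVec (Pi.single j 1) i' = κ x i' j := by
    intro i'; rw [Matrix.mulVec_single_one]; rfl
  have h2 : (∑ i', (Pi.single (M := fun _ : Fin d => ℝ) j 1 i') ^ 2) = 1 := by
    rw [Finset.sum_eq_single j] <;> simp +contextual [Pi.single_apply]
  rw [h2, Real.sqrt_one, mul_one] at h
  simp only [h1] at h
  calc |κ x i j| = Real.sqrt ((κ x i j) ^ 2) := (Real.sqrt_sq_eq_abs _).symm
    _ ≤ Real.sqrt (∑ i', (κ x i' j) ^ 2) :=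
        Real.sqrt_le_sqrt (Finset.single_le_sum (f := fun i' => (κ x i' j) ^ 2)
          (fun _ _ => sq_nonneg _) (Finset.mem_univ i))
    _ ≤ αs := h

lemma mulVec_comp_memℒp {μ : Measure (Fin d → ℝ)}
    {κ : (Fin d → ℝ) → Matrix (Fin d) (Fin d) ℝ}
    (hκm : ∀ i j, Measurable fun x => κ x i j) {αs : ℝ}
    (hent : ∀ᵐ x ∂μ, ∀ i j, |κ x i j| ≤ αs)
    {v : (Fin d → ℝ) → (Fin d → ℝ)} (hv : ∀ j, MemLp (fun x => v x j) 2 μ)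
    (i : Fin d) : MemLp (fun x => (κ x).mulVec (v x) i) 2 μ := by
  have hexp : (fun x => (κ x).mulVec (v x) i) = fun x => ∑ j, κ x i j * v x j := by
    funext x; rw [Matrix.mulVec]; rfl
  rw [hexp]
  refine memLp_finsetSum _ fun j _ => ?_
  refine MemLp.of_le_mul (c := αs) (hv j) (((hκm i j).aestronglyMeasurable).mul (hv j).1) ?_
  filter_upwards [hent] with x hx
  rw [Real.norm_eq_abs, Real.norm_eq_abs, abs_mul]
  exact mul_le_mul_of_nonneg_right (hx i j) (abs_nonneg _)

end IncAux

/-- **Lower bound for the virtual inconsistency term** (key estimate of the Lemma on the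
inconsistency terms): with `P = P_{k−1}` the componentwise `L²(E;ℝ^d)` projection onto
polynomial vector fields of degree `≤ k−1`, and `|κ(x)ξ| ≤ α*|ξ|` a.e. on `E`,
`‖(I−P)(κ·Pg_h)‖² ≤ 2‖P(κ·g) − κ·g‖² + 8α*²‖g − g_h‖² + 8α*²‖g_h − Pg_h‖²`. -/
theorem inconsistency_lower_bound
    (d k : ℕ) (hk : 1 ≤ k)
    (E : Set (Fin d → ℝ)) (hE : IsOpen E) (hEb : Bornology.IsBounded E)
    (hpos : 0 < volume E) (hfin : volume E < ⊤)
    (κ : (Fin d → ℝ) → Matrix (Fin d) (Fin d) ℝ)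
    (hκm : ∀ i j, Measurable fun x => κ x i j)
    (αs : ℝ) (hαs : 0 < αs)
    (hκb : ∀ᵐ x ∂(volume.restrict E), ∀ ξ : Fin d → ℝ,
      Real.sqrt (∑ i, ((κ x).mulVec ξ i) ^ 2) ≤ αs * Real.sqrt (∑ i, (ξ i) ^ 2))
    (g gh : (Fin d → ℝ) → (Fin d → ℝ))
    (hg : MemLp g 2 (volume.restrict E)) (hgh : MemLp gh 2 (volume.restrict E))
    (Pgh : (Fin d → ℝ) → (Fin d → ℝ)) (hPgh : IsVecProj d (k - 1) E gh Pgh)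
    (Pkg : (Fin d → ℝ) → (Fin d → ℝ))
    (hPkg : IsVecProj d (k - 1) E (fun x => (κ x).mulVec (g x)) Pkg)
    (PkPgh : (Fin d → ℝ) → (Fin d → ℝ))
    (hPkPgh : IsVecProj d (k - 1) E (fun x => (κ x).mulVec (Pgh x)) PkPgh) :
    (∫ x in E, ∑ i, ((κ x).mulVec (Pgh x) i - PkPgh x i) ^ 2) ≤
      2 * (∫ x in E, ∑ i, (Pkg x i - (κ x).mulVec (g x) i) ^ 2) +
        8 * αs ^ 2 * (∫ x in E, ∑ i, (g x i - gh x i) ^ 2) +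
        8 * αs ^ 2 * (∫ x in E, ∑ i, (gh x i - Pgh x i) ^ 2) := by
    classical
  set μ := volume.restrict E with hμdef
  -- component membership in L²
  have hmg : ∀ i, MemLp (fun x => g x i) 2 μ := fun i => IncAux.comp_memℒp hg i
  have hmgh : ∀ i, MemLp (fun x => gh x i) 2 μ := fun i => IncAux.comp_memℒp hgh i
  have hmPgh : ∀ i, MemLp (fun x => Pgh x i) 2 μ :=
    fun i => IncAux.polyFun_memℒp (hPgh.1 i) hE hEb hfin
  have hmPkg : ∀ i, MemLp (fun x => Pkg x i) 2 μ :=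
    fun i => IncAux.polyFun_memℒp (hPkg.1 i) hE hEb hfin
  have hmPkPgh : ∀ i, MemLp (fun x => PkPgh x i) 2 μ :=
    fun i => IncAux.polyFun_memℒp (hPkPgh.1 i) hE hEb hfin
  have hent := IncAux.entry_bound hκb
  have hmA : ∀ i, MemLp (fun x => (κ x).mulVec (Pgh x) i) 2 μ :=
    fun i => IncAux.mulVec_comp_memℒp hκm hent hmPgh i
  have hmD : ∀ i, MemLp (fun x => (κ x).mulVec (g x) i) 2 μ :=
    fun i => IncAux.mulVec_comp_memℒp hκm hent hmg i
  have hmK : ∀ i, MemLp (fun x => (κ x).mulVec (fun j => Pgh x j - g x j) i) 2 μ :=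
    fun i => IncAux.mulVec_comp_memℒp hκm hent (fun j => IncAux.memℒp_sub (hmPgh j) (hmg j)) i
  -- mulVec is linear
  have hsub : ∀ x i, (κ x).mulVec (fun j => Pgh x j - g x j) i
      = (κ x).mulVec (Pgh x) i - (κ x).mulVec (g x) i := by
    intro x i
    have : (fun j => Pgh x j - g x j) = Pgh x - g x := rfl
    rw [this, Matrix.mulVec_sub]
    rfl
  -- integrability of the sums of squares
  have iAB : Integrable (fun x => ∑ i, ((κ x).mulVec (Pgh x) i - PkPgh x i) ^ 2) μ :=
    integrable_finset_sum _ fun i _ => (IncAux.memℒp_sub (hmA i) (hmPkPgh i)).integrable_sq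
  have iAC : Integrable (fun x => ∑ i, ((κ x).mulVec (Pgh x) i - Pkg x i) ^ 2) μ :=
    integrable_finset_sum _ fun i _ => (IncAux.memℒp_sub (hmA i) (hmPkg i)).integrable_sq
  have iCD : Integrable (fun x => ∑ i, (Pkg x i - (κ x).mulVec (g x) i) ^ 2) μ :=
    integrable_finset_sum _ fun i _ => (IncAux.memℒp_sub (hmPkg i) (hmD i)).integrable_sq
  have iK : Integrable (fun x => ∑ i, ((κ x).mulVec (fun j => Pgh x j - g x j) i) ^ 2) μ :=
    integrable_finset_sum _ fun i _ => (hmK i).integrable_sq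
  have iPg : Integrable (fun x => ∑ i, (Pgh x i - g x i) ^ 2) μ :=
    integrable_finset_sum _ fun i _ => (IncAux.memℒp_sub (hmPgh i) (hmg i)).integrable_sq
  have iggh : Integrable (fun x => ∑ i, (g x i - gh x i) ^ 2) μ :=
    integrable_finset_sum _ fun i _ => (IncAux.memℒp_sub (hmg i) (hmgh i)).integrable_sq
  have ighP : Integrable (fun x => ∑ i, (gh x i - Pgh x i) ^ 2) μ :=
    integrable_finset_sum _ fun i _ => (IncAux.memℒp_sub (hmgh i) (hmPgh i)).integrable_sq
  -- Step 1 : projection optimality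
  have step1 : (∫ x, ∑ i, ((κ x).mulVec (Pgh x) i - PkPgh x i) ^ 2 ∂μ)
      ≤ ∫ x, ∑ i, ((κ x).mulVec (Pgh x) i - Pkg x i) ^ 2 ∂μ := by
    rw [integral_finset_sum _ (fun i _ => (IncAux.memℒp_sub (hmA i) (hmPkPgh i)).integrable_sq),
      integral_finset_sum _ (fun i _ => (IncAux.memℒp_sub (hmA i) (hmPkg i)).integrable_sq)]
    refine Finset.sum_le_sum fun i _ => IncAux.proj_opt (hmA i) (hmPkPgh i) (hmPkg i) ?_
    exact hPkPgh.2 i (fun x => PkPgh x i - Pkg x i)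
      (IncAux.polyFun_sub (hPkPgh.1 i) (hPkg.1 i))
  -- Step 2 : split A - C = (A - D) - (C - D)
  have step2 : (∫ x, ∑ i, ((κ x).mulVec (Pgh x) i - Pkg x i) ^ 2 ∂μ)
      ≤ 2 * (∫ x, ∑ i, (Pkg x i - (κ x).mulVec (g x) i) ^ 2 ∂μ)
        + 2 * (∫ x, ∑ i, ((κ x).mulVec (fun j => Pgh x j - g x j) i) ^ 2 ∂μ) := by
    have hpt : ∀ x, (∑ i, ((κ x).mulVec (Pgh x) i - Pkg x i) ^ 2)
        ≤ 2 * (∑ i, (Pkg x i - (κ x).mulVec (g x) i) ^ 2)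
          + 2 * (∑ i, ((κ x).mulVec (fun j => Pgh x j - g x j) i) ^ 2) := by
      intro x
      rw [Finset.mul_sum, Finset.mul_sum, ← Finset.sum_add_distrib]
      refine Finset.sum_le_sum fun i _ => ?_
      rw [hsub x i]
      nlinarith [sq_nonneg ((κ x).mulVec (Pgh x) i + Pkg x i - 2 * (κ x).mulVec (g x) i)]
    calc (∫ x, ∑ i, ((κ x).mulVec (Pgh x) i - Pkg x i) ^ 2 ∂μ)
        ≤ ∫ x, (2 * (∑ i, (Pkg x i - (κ x).mulVec (g x) i) ^ 2)
            + 2 * (∑ i, ((κ x).mulVec (fun j => Pgh x j - g x j) i) ^ 2)) ∂μ :=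
          integral_mono iAC ((iCD.const_mul 2).add (iK.const_mul 2)) hpt
      _ = _ := by
          rw [integral_add (iCD.const_mul 2) (iK.const_mul 2), integral_const_mul,
            integral_const_mul]
  -- Step 3 : the operator bound on κ
  have step3 : (∫ x, ∑ i, ((κ x).mulVec (fun j => Pgh x j - g x j) i) ^ 2 ∂μ)
      ≤ αs ^ 2 * ∫ x, ∑ i, (Pgh x i - g x i) ^ 2 ∂μ := by
    rw [← integral_const_mul]
    refine integral_mono_ae iK (iPg.const_mul _) ?_
    filter_upwards [hκb] with x hx
    have h := hx (fun j => Pgh x j - g x j)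
    have h1 : (0:ℝ) ≤ ∑ i, ((κ x).mulVec (fun j => Pgh x j - g x j) i) ^ 2 :=
      Finset.sum_nonneg fun i _ => sq_nonneg _
    have h2 : (0:ℝ) ≤ ∑ i, (Pgh x i - g x i) ^ 2 :=
      Finset.sum_nonneg fun i _ => sq_nonneg _
    calc (∑ i, ((κ x).mulVec (fun j => Pgh x j - g x j) i) ^ 2)
        = (Real.sqrt (∑ i, ((κ x).mulVec (fun j => Pgh x j - g x j) i) ^ 2)) ^ 2 :=
          (Real.sq_sqrt h1).symm
      _ ≤ (αs * Real.sqrt (∑ i, (Pgh x i - g x i) ^ 2)) ^ 2 :=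
          pow_le_pow_left₀ (Real.sqrt_nonneg _) h 2
      _ = αs ^ 2 * ∑ i, (Pgh x i - g x i) ^ 2 := by
          rw [mul_pow, Real.sq_sqrt h2]
  -- Step 4 : split Pgh - g
  have step4 : (∫ x, ∑ i, (Pgh x i - g x i) ^ 2 ∂μ)
      ≤ 2 * (∫ x, ∑ i, (g x i - gh x i) ^ 2 ∂μ)
        + 2 * (∫ x, ∑ i, (gh x i - Pgh x i) ^ 2 ∂μ) := by
    have hpt : ∀ x, (∑ i, (Pgh x i - g x i) ^ 2)
        ≤ 2 * (∑ i, (g x i - gh x i) ^ 2) + 2 * (∑ i, (gh x i - Pgh x i) ^ 2) := by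
      intro x
      rw [Finset.mul_sum, Finset.mul_sum, ← Finset.sum_add_distrib]
      refine Finset.sum_le_sum fun i _ => ?_
      nlinarith [sq_nonneg (g x i + Pgh x i - 2 * gh x i)]
    calc (∫ x, ∑ i, (Pgh x i - g x i) ^ 2 ∂μ)
        ≤ ∫ x, (2 * (∑ i, (g x i - gh x i) ^ 2) + 2 * (∑ i, (gh x i - Pgh x i) ^ 2)) ∂μ :=
          integral_mono iPg ((iggh.const_mul 2).add (ighP.const_mul 2)) hpt
      _ = _ := by
          rw [integral_add (iggh.const_mul 2) (ighP.const_mul 2), integral_const_mul,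
            integral_const_mul]
  have hN6 : 0 ≤ ∫ x, ∑ i, (g x i - gh x i) ^ 2 ∂μ :=
    integral_nonneg fun x => Finset.sum_nonneg fun i _ => sq_nonneg _
  have hN7 : 0 ≤ ∫ x, ∑ i, (gh x i - Pgh x i) ^ 2 ∂μ :=
    integral_nonneg fun x => Finset.sum_nonneg fun i _ => sq_nonneg _
  have hα2 : (0:ℝ) < αs ^ 2 := pow_pos hαs 2
  nlinarith [mul_le_mul_of_nonneg_left step4 (le_of_lt hα2),
    mul_nonneg (le_of_lt hα2) hN6, mul_nonneg (le_of_lt hα2) hN7]
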